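/- arXiv:2509.17709 — 2 statements merged into one kernel-verified Lean document; each statement's English description precedes it below -/
import Mathlib

section
/- In a cyclic group G of prime order p with generator G₀ and a bilinear pairing e: G × G̃ → G_T into groups of order p, if A = G₀^r with r ≠ 0, B = A^(x₁ + Σ_j m_j·y_{j,1}), C = A^(x₂ + Σ_j m_j·y_{j,2}), H̃ ∈ G̃, D̃ = H̃^d, Ũ = H̃^(x₂ - d·x₁), and Ṽ_j = H̃^(y_{j,2} - d·y_{j,1}) for j ∈ [ℓ], then e(A, Ũ · Π_j Ṽ_j^{m_j}) · e(B, D̃) = e(C, H̃). -/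
section Helpers

variable {M : Type*} [CommGroup M] {p : ℕ} [Fact p.Prime]

omit [Fact p.Prime] in
lemma pow_mod_card' (h : Nat.card M = p) (x : M) (n : ℕ) :
    x ^ n = x ^ (n % p) := by
  conv_lhs => rw [← Nat.div_add_mod n p]
  rw [pow_add, pow_mul, ← h, pow_card_eq_one', one_pow, one_mul]

omit [Fact p.Prime] in
lemma pow_congr_mod (h : Nat.card M = p) {a b : ℕ} (hab : a % p = b % p) (x : M) :
    x ^ a = x ^ b := by
  rw [pow_mod_card' h x a, pow_mod_card' h x b, hab]

lemma pow_val_add (h : Nat.card M = p) (x : M) (a b : ZMod p) :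
    x ^ (a + b).val = x ^ a.val * x ^ b.val := by
  rw [pow_congr_mod h (a := (a + b).val) (b := a.val + b.val)
    (by rw [ZMod.val_add]; exact Nat.mod_mod_of_dvd _ dvd_rfl) x, pow_add]

lemma pow_val_mul (h : Nat.card M = p) (x : M) (a b : ZMod p) :
    x ^ (a * b).val = (x ^ a.val) ^ b.val := by
  rw [pow_congr_mod h (a := (a * b).val) (b := a.val * b.val)
    (by rw [ZMod.val_mul]; exact Nat.mod_mod_of_dvd _ dvd_rfl) x, pow_mul]

lemma pow_val_sum (h : Nat.card M = p) (x : M) {ι : Type*} (s : Finset ι)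
    (f : ι → ZMod p) :
    x ^ (∑ i ∈ s, f i).val = ∏ i ∈ s, x ^ (f i).val := by
  classical
  induction s using Finset.induction_on with
  | empty => simp [ZMod.val_zero]
  | insert a s hi ih =>
      rw [Finset.sum_insert hi, pow_val_add h, ih, Finset.prod_insert hi]

end Helpers

/-- Correctness of the verification equation of DS_CK20: in a type-3 bilinear
group of prime order `p`, a signature `(A, B, C)` produced with secret key
`(x₁, x₂, (y_{j,1}, y_{j,2})_j)` on message `(m_j)_j` verifies. -/
theorem ds_ck20_verification_correct
    (p : ℕ) [Fact p.Prime] (ℓ : ℕ)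
    (G G' GT : Type*) [CommGroup G] [CommGroup G'] [CommGroup GT]
    (hG : Nat.card G = p) (hG' : Nat.card G' = p) (hGT : Nat.card GT = p)
    (e : G → G' → GT)
    (hl : ∀ X X' Y, e (X * X') Y = e X Y * e X' Y)
    (hr : ∀ X Y Y', e X (Y * Y') = e X Y * e X Y')
    (hbil : ∀ (X : G) (Y : G') (a b : ℕ), e (X ^ a) (Y ^ b) = (e X Y) ^ (a * b))
    (G₀ : G) (hgen : ∀ x : G, x ∈ Subgroup.zpowers G₀)
    (r d x₁ x₂ : ZMod p) (m y₁ y₂ : Fin ℓ → ZMod p)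
    (hr0 : r ≠ 0)
    (A B C : G) (H D U : G') (V : Fin ℓ → G')
    (hA : A = G₀ ^ r.val)
    (hB : B = A ^ (x₁ + ∑ j, m j * y₁ j).val)
    (hC : C = A ^ (x₂ + ∑ j, m j * y₂ j).val)
    (hD : D = H ^ d.val)
    (hU : U = H ^ (x₂ - d * x₁).val)
    (hV : ∀ j, V j = H ^ (y₂ j - d * y₁ j).val) :
    e A (U * ∏ j, (V j) ^ (m j).val) * e B D = e C H := by
  -- pairing of powers in terms of `g := e G₀ H`
  have key : ∀ (a b : ZMod p), e (G₀ ^ a.val) (H ^ b.val) = e G₀ H ^ (a * b).val := by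
    intro a b
    rw [hbil]
    exact (pow_congr_mod hGT (by rw [ZMod.val_mul]; exact Nat.mod_mod_of_dvd _ dvd_rfl) _).symm
  have key2 : ∀ (a : ZMod p), e (G₀ ^ a.val) H = e G₀ H ^ a.val := by
    intro a
    have := hbil G₀ H a.val 1
    simpa using this
  -- rewrite the second argument of the first pairing as a single power of H
  have harg : U * ∏ j, (V j) ^ (m j).val
      = H ^ ((x₂ - d * x₁) + ∑ j, m j * (y₂ j - d * y₁ j)).val := by
    rw [pow_val_add hG', hU, pow_val_sum hG']
    congr 1
    refine Finset.prod_congr rfl fun j _ => ?_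
    rw [hV j, ← pow_val_mul hG', mul_comm (y₂ j - d * y₁ j)]
  have hsum : ∑ j, m j * (y₂ j - d * y₁ j)
      = (∑ j, m j * y₂ j) - d * ∑ j, m j * y₁ j := by
    rw [Finset.mul_sum, ← Finset.sum_sub_distrib]
    exact Finset.sum_congr rfl fun j _ => by ring
  have hz : r * ((x₂ - d * x₁) + ∑ j, m j * (y₂ j - d * y₁ j))
      + (r * (x₁ + ∑ j, m j * y₁ j)) * d
      = r * (x₂ + ∑ j, m j * y₂ j) := by
    rw [hsum]; ring
  rw [harg, hB, hC, hD, hA, ← pow_val_mul hG, ← pow_val_mul hG, key, key, key2,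
    ← pow_val_add hGT, hz]
end

section
/- In a cyclic group G of prime order p, suppose B_{n-1} ≠ A_{n-1}^{x₁ + S} (with A_{n-1} ≠ 1), where S = Σ_{i∈[n-1]} Σ_{j∈[ℓ]} m_{i,j} y_{i,j,1}, but the pairing verification e(A_{n-1}, Ũ Π_{i,j} Ṽ_{i,j}^{m_{i,j}}) · e(B_{n-1}, D̃) = e(C_{n-1}, H̃) holds with Ũ = H̃^{x₂ - d x₁}, Ṽ_{i,j} = H̃^{y_{i,j,2} - d y_{i,j,1}}, H̃ ≠ 1. Then the pair (E, F) := (C_{n-1}^{-1} · A_{n-1}^{x₂ + Σ_{i,j} m_{i,j} y_{i,j,2}}, B_{n-1} · A_{n-1}^{-x₁ - S}) satisfies e(E, H̃) · e(F, D̃) = 1_{G_T} and (E, F) ≠ (1_G, 1_G). -/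
private lemma pow_eq_of_zmod {p : ℕ} [NeZero p] {M : Type*} [Monoid M] (g : M)
    (hg : g ^ p = 1) {a b : ℕ} (h : (a : ZMod p) = (b : ZMod p)) : g ^ a = g ^ b := by
  rw [pow_eq_pow_mod a hg, pow_eq_pow_mod b hg, ← ZMod.val_natCast, ← ZMod.val_natCast, h]

private lemma cancel3 {GT : Type*} [CommGroup GT] (a b c : GT) :
    (a * b)⁻¹ * (a * c) * (b * c⁻¹) = 1 := by
  simpa [mul_inv_rev, mul_comm, mul_left_comm, mul_assoc] using mul_inv_cancel (a * b * c)

/-- DBP-solution extraction in Lemma 2: if the verification equation holds but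
`B_{n-1} ≠ A_{n-1}^{x₁+S}` (event Bad), then
`(E, F) = (C_{n-1}⁻¹·A_{n-1}^{x₂+Σ m y₂}, B_{n-1}·A_{n-1}^{-x₁-S})` is a
nontrivial solution to the double-pairing problem for `(H̃, D̃)`. -/
theorem dbp_solution_extraction
    (p : ℕ) [Fact p.Prime] (n ℓ : ℕ)
    (G G' GT : Type*) [CommGroup G] [CommGroup G'] [CommGroup GT]
    (hG : Nat.card G = p) (hG' : Nat.card G' = p) (hGT : Nat.card GT = p)
    (e : G → G' → GT)
    (hml : ∀ X X' Y, e (X * X') Y = e X Y * e X' Y)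
    (hmr : ∀ X Y Y', e X (Y * Y') = e X Y * e X Y')
    (hbil : ∀ (X : G) (Y : G') (x y : ℕ), e (X ^ x) (Y ^ y) = (e X Y) ^ (x * y))
    (d x₁ x₂ : ZMod p) (m y₁ y₂ : Fin n → Fin ℓ → ZMod p)
    (A B C : G) (H D U : G') (V : Fin n → Fin ℓ → G')
    (hAne : A ≠ 1) (hH : H ≠ 1)
    (hD : D = H ^ d.val)
    (hU : U = H ^ (x₂ - d * x₁).val)
    (hV : ∀ i j, V i j = H ^ ((y₂ i j) - d * (y₁ i j)).val)
    (hBad : B ≠ A ^ (x₁ + ∑ i, ∑ j, m i j * y₁ i j).val)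
    (hver : e A (U * ∏ i, ∏ j, (V i j) ^ (m i j).val) * e B D = e C H) :
    e (C⁻¹ * A ^ (x₂ + ∑ i, ∑ j, m i j * y₂ i j).val) H *
      e (B * (A ^ (x₁ + ∑ i, ∑ j, m i j * y₁ i j).val)⁻¹) D = 1 ∧
    ¬(C⁻¹ * A ^ (x₂ + ∑ i, ∑ j, m i j * y₂ i j).val = 1 ∧
      B * (A ^ (x₁ + ∑ i, ∑ j, m i j * y₁ i j).val)⁻¹ = 1) := by
  constructor
  · set sZ : ZMod p := x₁ + ∑ i, ∑ j, m i j * y₁ i j with hsZ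
    set tZ : ZMod p := x₂ + ∑ i, ∑ j, m i j * y₂ i j with htZ
    have hE1 : ∀ Y : G', e 1 Y = 1 := by
      intro Y
      have h := hml 1 1 Y
      rw [one_mul] at h
      exact (right_eq_mul.mp h)
    have hinv : ∀ (X : G) (Y : G'), e X⁻¹ Y = (e X Y)⁻¹ := by
      intro X Y
      have h := hml X X⁻¹ Y
      rw [mul_inv_cancel, hE1] at h
      exact (eq_inv_of_mul_eq_one_right h.symm)
    set g : GT := e A H with hg
    have hgP : g ^ p = 1 := by rw [← hGT]; exact pow_card_eq_one'
    have hA1 : ∀ N : ℕ, e A (H ^ N) = g ^ N := by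
      intro N
      have := hbil A H 1 N
      simpa using this
    set K : ℕ := (x₂ - d * x₁).val + ∑ i, ∑ j, ((y₂ i j - d * y₁ i j).val * (m i j).val) with hK
    have hprod : U * ∏ i, ∏ j, (V i j) ^ (m i j).val = H ^ K := by
      rw [hU, hK, pow_add]
      congr 1
      simp only [hV, ← pow_mul, Finset.prod_pow_eq_pow_sum]
    have hCH : e C H = g ^ K * e B D := by rw [← hver, hprod, hA1]
    have hAt : e (A ^ tZ.val) H = g ^ tZ.val := by
      have := hbil A H tZ.val 1
      simpa using this
    have hAs : e (A ^ sZ.val) D = g ^ (sZ.val * d.val) := by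
      rw [hD]; exact hbil A H sZ.val d.val
    have hkey : g ^ tZ.val = g ^ K * g ^ (sZ.val * d.val) := by
      rw [← pow_add]
      apply pow_eq_of_zmod g hgP
      rw [htZ, hsZ, hK]
      push_cast [ZMod.natCast_val, ZMod.cast_id]
      simp only [sub_mul, Finset.sum_sub_distrib]
      have h1 : (∑ i, ∑ j, y₂ i j * m i j : ZMod p) = ∑ i, ∑ j, m i j * y₂ i j :=
        Finset.sum_congr rfl fun i _ => Finset.sum_congr rfl fun j _ => mul_comm _ _
      have h2 : (∑ i, ∑ j, d * y₁ i j * m i j : ZMod p) = d * ∑ i, ∑ j, m i j * y₁ i j := by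
        rw [Finset.mul_sum]
        refine Finset.sum_congr rfl fun i _ => ?_
        rw [Finset.mul_sum]
        exact Finset.sum_congr rfl fun j _ => by ring
      rw [h1, h2]
      ring
    rw [hml, hml, hinv, hinv, hCH, hAt, hAs, hkey]
    exact cancel3 _ _ _
  · rintro ⟨-, hF⟩
    exact hBad (mul_inv_eq_one.mp hF)
end
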